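/- Let N ≥ 2 and let y_1, …, y_N be distinct points in ℝ². Let f = (f_1, …, f_N) ∈ ℝ^N be nonzero with Σ_{j=1}^N f_j = 0 and Σ_{j,k=1}^N f_j f_k |y_j − y_k|² = 0. Then Σ_{j ≠ k} f_j f_k |y_j − y_k|² log(|y_j − y_k|²) > 0. -/

import Mathlib

open Real
noncomputable section

open MeasureTheory Set Filter Topology

section Stmt7Aux

lemma exp_mul_integrableOn {s : ℝ} (hs : 0 < s) :
    IntegrableOn (fun t => Real.exp (-(s*t))) (Ioi (0:ℝ)) := by
  simpa [neg_mul] using exp_neg_integrableOn_Ioi 0 hs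

lemma tendsto_exp_mul {s : ℝ} (hs : 0 < s) :
    Tendsto (fun t => Real.exp (-(s*t))) atTop (𝓝 0) := by
  apply Real.tendsto_exp_atBot.comp
  exact tendsto_neg_atTop_atBot.comp (Tendsto.const_mul_atTop hs tendsto_id)

lemma integral_exp_mul_Ioi' {s : ℝ} (hs : 0 < s) :
    ∫ t in Ioi (0:ℝ), Real.exp (-(s*t)) = 1/s := by
  have hderiv : ∀ x ∈ Ioi (0:ℝ), HasDerivAt (fun t => -Real.exp (-(s*t))/s) (Real.exp (-(s*x))) x := by
    intro x _
    have h1 : HasDerivAt (fun t : ℝ => -(s*t)) (-s) x := by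
      exact (((hasDerivAt_id x).const_mul s).neg).congr_deriv (by simp)
    have := (h1.exp).neg.div_const s
    refine this.congr_deriv ?_
    field_simp
  have hcont : ContinuousWithinAt (fun t => -Real.exp (-(s*t))/s) (Ici (0:ℝ)) 0 :=
    (Continuous.continuousWithinAt (by continuity))
  have htend : Tendsto (fun t => -Real.exp (-(s*t))/s) atTop (𝓝 0) := by
    have := ((tendsto_exp_mul hs).neg).div_const s
    simpa using this
  have := MeasureTheory.integral_Ioi_of_hasDerivAt_of_tendsto hcont hderiv (exp_mul_integrableOn hs) htend
  simp at this
  rw [this]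
  field_simp

lemma integral_exp_mul {t : ℝ} (ht : 0 < t) (a b : ℝ) :
    ∫ s in a..b, Real.exp (-(s*t)) = (Real.exp (-(a*t)) - Real.exp (-(b*t)))/t := by
  have h : ∀ s ∈ Set.uIcc a b, HasDerivAt (fun s => -Real.exp (-(s*t))/t) (Real.exp (-(s*t))) s := by
    intro s _
    have h1 : HasDerivAt (fun s : ℝ => -(s*t)) (-t) s := by
      exact (((hasDerivAt_id s).mul_const t).neg).congr_deriv (by simp)
    have := (h1.exp).neg.div_const t
    refine this.congr_deriv ?_
    field_simp
  rw [intervalIntegral.integral_eq_sub_of_hasDerivAt h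
    ((Real.continuous_exp.comp (by continuity)).intervalIntegrable _ _)]
  ring

/-- Frullani core, for `0 < a ≤ b`. -/
lemma frullani_core {a b : ℝ} (ha : 0 < a) (hab : a ≤ b) :
    IntegrableOn (fun t => (Real.exp (-(a*t)) - Real.exp (-(b*t)))/t) (Ioi 0) ∧
    ∫ t in Ioi 0, (Real.exp (-(a*t)) - Real.exp (-(b*t)))/t = Real.log b - Real.log a := by
  have hb : 0 < b := lt_of_lt_of_le ha hab
  set μ := volume.restrict (Ioi (0:ℝ))
  set ν := volume.restrict (Ioc a b)
  have hFm : AEStronglyMeasurable (fun p : ℝ × ℝ => Real.exp (-(p.2*p.1))) (μ.prod ν) :=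
    (Continuous.aestronglyMeasurable (by continuity))
  -- key pointwise identity: for t > 0, the s-integral equals the Frullani integrand
  have hpt : ∀ t ∈ Ioi (0:ℝ), (∫ s in Ioc a b, Real.exp (-(s*t)))
      = (Real.exp (-(a*t)) - Real.exp (-(b*t)))/t := by
    intro t ht
    rw [← intervalIntegral.integral_of_le hab]
    exact integral_exp_mul ht a b
  have hbound : ∀ t ∈ Ioi (0:ℝ), (∫ s in Ioc a b, Real.exp (-(s*t)))
      ≤ (b - a) * Real.exp (-(a*t)) := by
    intro t ht
    have : (∫ s in Ioc a b, Real.exp (-(s*t))) ≤ ∫ _s in Ioc a b, Real.exp (-(a*t)) := by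
      apply setIntegral_mono_on
      · exact (Real.continuous_exp.comp (by continuity)).integrableOn_Ioc
      · exact integrableOn_const (by simp [Real.volume_Ioc])
      · exact measurableSet_Ioc
      · intro s hs
        apply Real.exp_le_exp.mpr
        have ht' : 0 < t := ht
        nlinarith [hs.1]
    simpa [Real.volume_Ioc, ENNReal.toReal_ofReal (sub_nonneg.mpr hab), smul_eq_mul, max_eq_left (sub_nonneg.mpr hab)] using this
  -- integrability on the product
  have hF : Integrable (fun p : ℝ × ℝ => Real.exp (-(p.2*p.1))) (μ.prod ν) := by
    rw [MeasureTheory.integrable_prod_iff hFm]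
    constructor
    · filter_upwards [ae_restrict_mem measurableSet_Ioi] with t ht
      exact ((Real.continuous_exp.comp (by continuity)).integrableOn_Ioc)
    · apply Integrable.mono' (g := fun t => (b - a) * Real.exp (-(a*t)))
      · exact (exp_mul_integrableOn ha).const_mul _
      · exact hFm.norm.integral_prod_right'
      · filter_upwards [ae_restrict_mem measurableSet_Ioi] with t ht
        have h1 : (∫ s, ‖Real.exp (-(s*t))‖ ∂ν) = ∫ s in Ioc a b, Real.exp (-(s*t)) := by
          simp [ν, Real.norm_eq_abs, abs_of_pos (Real.exp_pos _)]
        rw [Real.norm_eq_abs, abs_of_nonneg]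
        · rw [h1]; exact hbound t ht
        · rw [h1]; positivity
  have hswap := MeasureTheory.integral_integral_swap (f := fun t s => Real.exp (-(s*t))) hF
  constructor
  · have := hF.integral_prod_left
    apply (integrable_congr ?_).mp this
    filter_upwards [ae_restrict_mem measurableSet_Ioi] with t ht
    exact hpt t ht
  · have hL : (∫ t, ∫ s, Real.exp (-(s*t)) ∂ν ∂μ)
        = ∫ t in Ioi 0, (Real.exp (-(a*t)) - Real.exp (-(b*t)))/t := by
      apply setIntegral_congr_fun measurableSet_Ioi
      intro t ht
      exact hpt t ht
    have hR : (∫ s, ∫ t, Real.exp (-(s*t)) ∂μ ∂ν) = Real.log b - Real.log a := by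
      have h1 : (∫ s, ∫ t, Real.exp (-(s*t)) ∂μ ∂ν) = ∫ s in Ioc a b, 1/s := by
        apply setIntegral_congr_fun measurableSet_Ioc
        intro s hs
        exact integral_exp_mul_Ioi' (lt_of_lt_of_le ha hs.1.le)
      rw [h1, ← intervalIntegral.integral_of_le hab, integral_one_div, Real.log_div hb.ne' ha.ne']
      exact Set.notMem_uIcc_of_lt ha hb
    rw [← hL, hswap, hR]

/-- Frullani with the normalization used later: integrand `(e^{-t} - e^{-vt})/t`. -/
lemma frullani {v : ℝ} (hv : 0 < v) :
    IntegrableOn (fun t => (Real.exp (-t) - Real.exp (-(v*t)))/t) (Ioi 0) ∧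
    (∫ t in Ioi 0, (Real.exp (-t) - Real.exp (-(v*t)))/t = Real.log v) ∧
    (∫ t in Ioi 0, ‖(Real.exp (-t) - Real.exp (-(v*t)))/t‖ = |Real.log v|) := by
  rcases le_or_gt 1 v with h1 | h1
  · obtain ⟨hint, hval⟩ := frullani_core one_pos h1
    simp only [one_mul] at hint hval
    have hnn : ∀ t ∈ Ioi (0:ℝ), 0 ≤ (Real.exp (-t) - Real.exp (-(v*t)))/t := by
      intro t ht
      have ht' : (0:ℝ) < t := ht
      apply div_nonneg _ ht'.le
      have : -(v*t) ≤ -t := by nlinarith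
      simpa using Real.exp_le_exp.mpr this
    refine ⟨hint, by simpa using hval, ?_⟩
    have : ∫ t in Ioi 0, ‖(Real.exp (-t) - Real.exp (-(v*t)))/t‖
        = ∫ t in Ioi 0, (Real.exp (-t) - Real.exp (-(v*t)))/t := by
      apply setIntegral_congr_fun measurableSet_Ioi
      intro t ht
      exact (Real.norm_of_nonneg (hnn t ht))
    rw [this, hval, Real.log_one, abs_of_nonneg] <;> simp [Real.log_nonneg h1]
  · obtain ⟨hint, hval⟩ := frullani_core hv h1.le
    simp only [one_mul] at hint hval
    have hnn : ∀ t ∈ Ioi (0:ℝ), 0 ≤ (Real.exp (-(v*t)) - Real.exp (-t))/t := by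
      intro t ht
      have ht' : (0:ℝ) < t := ht
      apply div_nonneg _ ht'.le
      have : -t ≤ -(v*t) := by nlinarith
      simpa using Real.exp_le_exp.mpr this
    have hneg : (fun t => (Real.exp (-t) - Real.exp (-(v*t)))/t)
        = fun t => -((Real.exp (-(v*t)) - Real.exp (-t))/t) := by
      funext t; ring
    refine ⟨by rw [hneg]; exact hint.neg, ?_, ?_⟩
    · rw [hneg, integral_neg, hval, Real.log_one]; ring
    · have : ∫ t in Ioi 0, ‖(Real.exp (-t) - Real.exp (-(v*t)))/t‖
          = ∫ t in Ioi 0, (Real.exp (-(v*t)) - Real.exp (-t))/t := by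
        apply setIntegral_congr_fun measurableSet_Ioi
        intro t ht
        simp only [Real.norm_eq_abs]; rw [← abs_neg, ← neg_div, neg_sub, abs_of_nonneg (hnn t ht)]
      rw [this, hval, Real.log_one, abs_of_nonpos (Real.log_nonpos hv.le h1.le)]
      ring

lemma integrableOn_abs_log {u : ℝ} (hu : 0 < u) :
    IntegrableOn (fun s => |Real.log s|) (Ioc 0 u) := by
  have hg : IntegrableOn (fun s : ℝ => 2 * s ^ (-(1:ℝ)/2) + s) (Ioc 0 u) := by
    apply Integrable.add
    · have := (intervalIntegral.intervalIntegrable_rpow' (r := -(1:ℝ)/2) (by norm_num)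
        (a := 0) (b := u))
      rw [intervalIntegrable_iff_integrableOn_Ioc_of_le hu.le] at this
      exact this.const_mul 2
    · exact continuous_id.integrableOn_Ioc
  apply Integrable.mono' hg
  · exact (Real.measurable_log.abs).aestronglyMeasurable
  · filter_upwards [ae_restrict_mem measurableSet_Ioc] with s hs
    have hs0 : (0:ℝ) < s := hs.1
    rw [Real.norm_eq_abs, abs_abs]
    rcases le_or_gt s 1 with h | h
    · have hlog : Real.log (s ^ (-(1:ℝ)/2)) ≤ s ^ (-(1:ℝ)/2) := by
        calc Real.log (s ^ (-(1:ℝ)/2)) ≤ s ^ (-(1:ℝ)/2) - 1 :=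
          Real.log_le_sub_one_of_pos (Real.rpow_pos_of_pos hs0 _)
        _ ≤ _ := by linarith
      rw [Real.log_rpow hs0] at hlog
      have : |Real.log s| = -Real.log s := abs_of_nonpos (Real.log_nonpos hs0.le h)
      rw [this]
      nlinarith [Real.rpow_pos_of_pos hs0 (-(1:ℝ)/2)]
    · have : |Real.log s| = Real.log s := abs_of_nonneg (Real.log_nonneg h.le)
      rw [this]
      have := Real.log_le_sub_one_of_pos hs0
      have h2 : (0:ℝ) ≤ 2 * s ^ (-(1:ℝ)/2) := by positivity
      linarith

lemma integrableOn_log_Ioc {u : ℝ} (hu : 0 < u) :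
    IntegrableOn Real.log (Ioc 0 u) := by
  apply Integrable.mono' (integrableOn_abs_log hu)
  · exact Real.measurable_log.aestronglyMeasurable
  · filter_upwards with s using le_of_eq (Real.norm_eq_abs _)

lemma integral_log_Ioc {u : ℝ} (hu : 0 < u) :
    ∫ s in Ioc 0 u, Real.log s = u * Real.log u - u := by
  rw [← intervalIntegral.integral_of_le hu.le]
  have hderiv : ∀ x ∈ Ioo (0:ℝ) u, HasDerivAt (fun s => s * Real.log s - s) (Real.log x) x := by
    intro x hx
    have h1 : HasDerivAt (fun s : ℝ => s * Real.log s) (Real.log x + 1) x := by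
      have := (hasDerivAt_id x).mul (Real.hasDerivAt_log (ne_of_gt hx.1))
      refine this.congr_deriv ?_
      simp [ne_of_gt hx.1]
    exact (h1.sub (hasDerivAt_id x)).congr_deriv (by simp)
  have hint : IntervalIntegrable Real.log volume 0 u := by
    rw [intervalIntegrable_iff_integrableOn_Ioc_of_le hu.le]
    exact integrableOn_log_Ioc hu
  have h0 : Tendsto (fun s : ℝ => s * Real.log s - s) (𝓝[>] 0) (𝓝 0) := by
    have h1 : Tendsto (fun s : ℝ => Real.log s * s ^ (1:ℝ)) (𝓝[>] 0) (𝓝 0) :=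
      tendsto_log_mul_rpow_nhdsGT_zero one_pos
    have h2 : Tendsto (fun s : ℝ => s) (𝓝[>] (0:ℝ)) (𝓝 0) :=
      tendsto_nhdsWithin_of_tendsto_nhds Filter.tendsto_id |>.mono_right (by simp)
    have h2' : Tendsto (fun s : ℝ => s) (𝓝[>] (0:ℝ)) (𝓝 0) := by
      exact (continuous_id.tendsto (0:ℝ)).mono_left (nhdsWithin_le_nhds)
    have := h1.sub h2'
    simp only [sub_zero] at this
    apply Tendsto.congr' _ (by simpa using this)
    filter_upwards [self_mem_nhdsWithin] with s hs
    have : (0:ℝ) < s := hs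
    simp [Real.rpow_one]
    ring
  have hu' : Tendsto (fun s : ℝ => s * Real.log s - s) (𝓝[<] u) (𝓝 (u * Real.log u - u)) := by
    apply ContinuousWithinAt.tendsto
    apply ContinuousWithinAt.sub
    · exact (continuousWithinAt_id.mul ((Real.continuousAt_log hu.ne').continuousWithinAt))
    · exact continuousWithinAt_id
  have := intervalIntegral.integral_eq_sub_of_hasDerivAt_of_tendsto hu hderiv hint h0 hu'
  rw [this]; ring

def phi (u t : ℝ) : ℝ := (Real.exp (-(u*t)) - 1 + u*t*Real.exp (-t))/t^2

lemma phi_repr {u : ℝ} (hu : 0 < u) :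
    IntegrableOn (phi u) (Ioi 0) ∧ ∫ t in Ioi 0, phi u t = u * Real.log u - u := by
  set μ := volume.restrict (Ioc (0:ℝ) u)
  set ν := volume.restrict (Ioi (0:ℝ))
  set G : ℝ × ℝ → ℝ := fun p => (Real.exp (-p.2) - Real.exp (-(p.1*p.2)))/p.2 with hG
  have hGm : AEStronglyMeasurable G (μ.prod ν) := by
    apply Measurable.aestronglyMeasurable
    measurability
  -- integrability on the product
  have hGint : Integrable G (μ.prod ν) := by
    rw [MeasureTheory.integrable_prod_iff hGm]
    constructor
    · filter_upwards [ae_restrict_mem measurableSet_Ioc] with s hs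
      exact (frullani hs.1).1
    · apply Integrable.mono' (g := fun s => |Real.log s|) (integrableOn_abs_log hu)
      · exact hGm.norm.integral_prod_right'
      · filter_upwards [ae_restrict_mem measurableSet_Ioc] with s hs
        rw [Real.norm_eq_abs, abs_of_nonneg (by positivity)]
        exact le_of_eq ((frullani hs.1).2.2)
  have hswap := MeasureTheory.integral_integral_swap
    (f := fun s t => (Real.exp (-t) - Real.exp (-(s*t)))/t) hGint
  -- pointwise: inner s-integral equals phi u t for t > 0
  have hpt : ∀ t ∈ Ioi (0:ℝ), (∫ s in Ioc (0:ℝ) u, (Real.exp (-t) - Real.exp (-(s*t)))/t)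
      = phi u t := by
    intro t ht
    have ht' : (0:ℝ) < t := ht
    have hsplit : (∫ s in Ioc (0:ℝ) u, (Real.exp (-t) - Real.exp (-(s*t)))/t)
        = (∫ s in Ioc (0:ℝ) u, Real.exp (-t)/t) - (∫ s in Ioc (0:ℝ) u, Real.exp (-(s*t))/t) := by
      rw [← integral_sub]
      · apply setIntegral_congr_fun measurableSet_Ioc
        intro s _
        ring
      · exact integrableOn_const (by simp [Real.volume_Ioc])
      · exact ((Real.continuous_exp.comp (by continuity)).integrableOn_Ioc).div_const t
    rw [hsplit]
    have h1 : (∫ _s in Ioc (0:ℝ) u, Real.exp (-t)/t) = u * Real.exp (-t) / t := by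
      simp [Real.volume_Ioc, ENNReal.toReal_ofReal hu.le, smul_eq_mul, max_eq_left hu.le]
      ring
    have h2 : (∫ s in Ioc (0:ℝ) u, Real.exp (-(s*t))/t)
        = (1 - Real.exp (-(u*t)))/t^2 := by
      rw [integral_div, ← intervalIntegral.integral_of_le hu.le, integral_exp_mul ht']
      field_simp
      ring_nf
      simp
    rw [h1, h2, phi]
    field_simp
    ring
  have hL : (∫ s, ∫ t, (Real.exp (-t) - Real.exp (-(s*t)))/t ∂ν ∂μ) = u * Real.log u - u := by
    have : (∫ s, ∫ t, (Real.exp (-t) - Real.exp (-(s*t)))/t ∂ν ∂μ)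
        = ∫ s in Ioc (0:ℝ) u, Real.log s := by
      apply setIntegral_congr_fun measurableSet_Ioc
      intro s hs
      exact (frullani hs.1).2.1
    rw [this, integral_log_Ioc hu]
  constructor
  · have := hGint.swap.integral_prod_left
    apply (integrable_congr ?_).mp this
    filter_upwards [ae_restrict_mem measurableSet_Ioi] with t ht
    exact (hpt t ht)
  · have hR : (∫ t, ∫ s, (Real.exp (-t) - Real.exp (-(s*t)))/t ∂μ ∂ν)
        = ∫ t in Ioi 0, phi u t := by
      apply setIntegral_congr_fun measurableSet_Ioi
      intro t ht
      exact hpt t ht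
    rw [← hR, ← hswap, hL]

lemma pd_exp_inner {n : ℕ} (c a b : Fin n → ℝ) :
    0 ≤ ∑ j, ∑ k, c j * c k * Real.exp (a j * a k + b j * b k) := by
  have hexp : ∀ x : ℝ, Real.exp x = ∑' m : ℕ, x ^ m / m.factorial := by
    intro x
    rw [Real.exp_eq_exp_ℝ, NormedSpace.exp_eq_tsum_div]
  have hsummable : ∀ j k : Fin n,
      Summable (fun m : ℕ => c j * c k * ((a j * a k + b j * b k) ^ m / m.factorial)) :=
    fun j k => (Real.summable_pow_div_factorial _).mul_left _
  have key : (∑ j, ∑ k, c j * c k * Real.exp (a j * a k + b j * b k))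
      = ∑' m : ℕ, ∑ j, ∑ k, c j * c k * ((a j * a k + b j * b k) ^ m / m.factorial) := by
    have step1 : (∑ j, ∑ k, c j * c k * Real.exp (a j * a k + b j * b k))
        = ∑ j, ∑ k, ∑' m : ℕ, c j * c k * ((a j * a k + b j * b k) ^ m / m.factorial) := by
      apply Finset.sum_congr rfl; intro j _
      apply Finset.sum_congr rfl; intro k _
      rw [tsum_mul_left, ← hexp]
    rw [step1]
    have step2 : (∑ j, ∑ k, ∑' m : ℕ, c j * c k * ((a j * a k + b j * b k) ^ m / m.factorial))
        = ∑ j : Fin n, ∑' m : ℕ, ∑ k, c j * c k * ((a j * a k + b j * b k) ^ m / m.factorial) := by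
      apply Finset.sum_congr rfl; intro j _
      exact (Summable.tsum_finsetSum (fun k _ => hsummable j k)).symm
    rw [step2]
    exact (Summable.tsum_finsetSum (fun j _ => summable_sum (fun k _ => hsummable j k))).symm
  rw [key]
  apply tsum_nonneg
  intro m
  set A : ℕ → Fin n → ℝ := fun i j => c j * a j ^ i * b j ^ (m - i) with hA
  set w : ℕ → ℝ := fun i => (m.choose i : ℝ) / m.factorial with hw
  have expand : ∀ j k : Fin n, c j * c k * ((a j * a k + b j * b k) ^ m / m.factorial)
      = ∑ i ∈ Finset.range (m+1), A i j * A i k * w i := by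
    intro j k
    rw [add_pow, Finset.sum_div, Finset.mul_sum]
    apply Finset.sum_congr rfl
    intro i _
    rw [mul_pow, mul_pow]
    simp only [hA, hw]
    ring
  have hfac : ∀ i, ∑ j, ∑ k, (A i j * A i k * w i) = (∑ j, A i j)^2 * w i := by
    intro i
    rw [sq, Finset.sum_mul_sum, Finset.sum_mul]
    apply Finset.sum_congr rfl; intro j _
    rw [Finset.sum_mul]
  calc (0:ℝ) ≤ ∑ i ∈ Finset.range (m+1), (∑ j, A i j)^2 * w i := by
        apply Finset.sum_nonneg; intro i _; positivity
    _ = ∑ i ∈ Finset.range (m+1), ∑ j, ∑ k, (A i j * A i k * w i) := by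
        simp_rw [hfac]
    _ = ∑ j, ∑ k, ∑ i ∈ Finset.range (m+1), (A i j * A i k * w i) := by
        rw [Finset.sum_comm]
        apply Finset.sum_congr rfl; intro j _
        rw [Finset.sum_comm]
    _ = ∑ j, ∑ k, c j * c k * ((a j * a k + b j * b k) ^ m / m.factorial) := by
        apply Finset.sum_congr rfl; intro j _
        apply Finset.sum_congr rfl; intro k _
        rw [expand]

lemma gauss_kernel_nonneg {n : ℕ} (c : Fin n → ℝ) (w : Fin n → EuclideanSpace ℝ (Fin 2))
    {t : ℝ} (ht : 0 ≤ t) :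
    0 ≤ ∑ j, ∑ k, c j * c k * Real.exp (-(‖w j - w k‖^2 * t)) := by
  have key : ∀ j k : Fin n, c j * c k * Real.exp (-(‖w j - w k‖^2 * t))
      = (c j * Real.exp (-t*‖w j‖^2)) * (c k * Real.exp (-t*‖w k‖^2)) *
        Real.exp ((Real.sqrt (2*t) * w j 0) * (Real.sqrt (2*t) * w k 0)
          + (Real.sqrt (2*t) * w j 1) * (Real.sqrt (2*t) * w k 1)) := by
    intro j k
    have hn : ‖w j - w k‖^2 = ‖w j‖^2 - 2 * inner ℝ (w j) (w k) + ‖w k‖^2 :=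
      norm_sub_sq_real (w j) (w k)
    have hinner : (inner ℝ (w j) (w k) : ℝ) = w j 0 * w k 0 + w j 1 * w k 1 := by
      simp [PiLp.inner_apply, Fin.sum_univ_two, RCLike.inner_apply]; ring
    have hsq : Real.sqrt (2*t) * Real.sqrt (2*t) = 2*t := Real.mul_self_sqrt (by linarith)
    have harg : -(‖w j - w k‖^2 * t) = (-t*‖w j‖^2 + -t*‖w k‖^2) +
        ((Real.sqrt (2*t) * w j 0) * (Real.sqrt (2*t) * w k 0)
          + (Real.sqrt (2*t) * w j 1) * (Real.sqrt (2*t) * w k 1)) := by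
      rw [hn, hinner]
      nlinarith [hsq]
    rw [harg, Real.exp_add, Real.exp_add]
    ring
  calc (0:ℝ) ≤ ∑ j, ∑ k, (c j * Real.exp (-t*‖w j‖^2)) * (c k * Real.exp (-t*‖w k‖^2)) *
        Real.exp ((Real.sqrt (2*t) * w j 0) * (Real.sqrt (2*t) * w k 0)
          + (Real.sqrt (2*t) * w j 1) * (Real.sqrt (2*t) * w k 1)) :=
      pd_exp_inner (fun j => c j * Real.exp (-t*‖w j‖^2))
        (fun j => Real.sqrt (2*t) * w j 0) (fun j => Real.sqrt (2*t) * w j 1)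
    _ = _ := by
      apply Finset.sum_congr rfl; intro j _
      apply Finset.sum_congr rfl; intro k _
      exact (key j k).symm

lemma phi_repr' {u : ℝ} (hu : 0 ≤ u) :
    IntegrableOn (phi u) (Ioi 0) ∧ ∫ t in Ioi 0, phi u t = u * Real.log u - u := by
  rcases hu.eq_or_lt with h | h
  · have hphi : phi u = fun _ => (0:ℝ) := by
      funext t; simp [phi, ← h]
    rw [hphi, ← h]
    simp [integrableOn_const]
  · exact phi_repr h

end Stmt7Aux

/-- If `y_1, …, y_N` are distinct points of `ℝ²`, `f ≠ 0`,
`Σ f_j = 0` and `Σ_{j,k} f_j f_k |y_j - y_k|² = 0`, then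
`Σ_{j ≠ k} f_j f_k |y_j - y_k|² log(|y_j - y_k|²) > 0`. -/
theorem stmt_7 (N : ℕ) (hN : 2 ≤ N)
    (y : Fin N → EuclideanSpace ℝ (Fin 2)) (hy : Function.Injective y)
    (f : Fin N → ℝ) (hf : f ≠ 0)
    (hsum : ∑ j, f j = 0)
    (hG1 : ∑ j, ∑ k, f j * f k * ‖y j - y k‖^2 = 0) :
    0 < ∑ j, ∑ k,
      (if j ≠ k then f j * f k * ‖y j - y k‖^2 * Real.log (‖y j - y k‖^2) else 0) := by
  classical
  set u : Fin N → Fin N → ℝ := fun j k => ‖y j - y k‖^2 with hu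
  have hunn : ∀ j k, 0 ≤ u j k := fun j k => sq_nonneg _
  have hupos : ∀ j k, j ≠ k → 0 < u j k := by
    intro j k hjk
    have h1 : y j - y k ≠ 0 := sub_ne_zero.mpr (fun h => hjk (hy h))
    have := norm_pos_iff.mpr h1
    positivity
  -- Step 1: rewrite the goal sum
  have hifsum : (∑ j, ∑ k,
        (if j ≠ k then f j * f k * ‖y j - y k‖^2 * Real.log (‖y j - y k‖^2) else 0))
      = ∑ j, ∑ k, f j * f k * (u j k * Real.log (u j k)) := by
    apply Finset.sum_congr rfl; intro j _
    apply Finset.sum_congr rfl; intro k _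
    by_cases hjk : j = k
    · subst hjk
      simp [u, sub_self]
    · rw [if_pos hjk, mul_assoc]
  rw [hifsum]
  -- auxiliary zero sums
  have e1 : (∑ j, ∑ k, f j * f k) = 0 := by
    rw [← Finset.sum_mul_sum, hsum]
    simp
  have e2 : (∑ j, ∑ k, f j * f k * u j k) = 0 := hG1
  -- Step 2: subtract the vanishing linear term
  have hS : (∑ j, ∑ k, f j * f k * (u j k * Real.log (u j k)))
      = ∑ j, ∑ k, f j * f k * (u j k * Real.log (u j k) - u j k) := by
    simp_rw [mul_sub, Finset.sum_sub_distrib]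
    rw [e2]
    ring
  rw [hS]
  -- integrability of each pair term
  have hint : ∀ j k : Fin N, IntegrableOn (fun t => f j * f k * phi (u j k) t) (Ioi 0) :=
    fun j k => ((phi_repr' (hunn j k)).1.const_mul _)
  have hintj : ∀ j, IntegrableOn (fun t => ∑ k, f j * f k * phi (u j k) t) (Ioi 0) :=
    fun j => integrable_finset_sum _ (fun k _ => hint j k)
  set H : ℝ → ℝ := fun t => ∑ j, ∑ k, f j * f k * phi (u j k) t with hH
  have hHint : IntegrableOn H (Ioi 0) := integrable_finset_sum _ (fun j _ => hintj j)
  -- the integral of H is the target sum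
  have hHval : ∫ t in Ioi 0, H t = ∑ j, ∑ k, f j * f k * (u j k * Real.log (u j k) - u j k) := by
    rw [hH]
    rw [integral_finset_sum _ (fun j _ => hintj j)]
    apply Finset.sum_congr rfl; intro j _
    rw [integral_finset_sum _ (fun k _ => hint j k)]
    apply Finset.sum_congr rfl; intro k _
    rw [MeasureTheory.integral_const_mul, (phi_repr' (hunn j k)).2]
  rw [← hHval]
  -- pointwise formula for H
  set g : ℝ → ℝ := fun t => ∑ j, ∑ k, f j * f k * Real.exp (-(u j k * t)) with hg
  have key : ∀ t ∈ Ioi (0:ℝ), H t = g t / t^2 := by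
    intro t ht
    have ht' : (0:ℝ) < t := ht
    have expand : ∀ j k : Fin N, f j * f k * phi (u j k) t
        = (f j * f k * Real.exp (-(u j k * t)))/t^2 - (f j * f k)/t^2
          + (f j * f k * u j k) * (Real.exp (-t)/t) := by
      intro j k
      simp only [phi]
      field_simp
    calc H t = ∑ j, ∑ k, ((f j * f k * Real.exp (-(u j k * t)))/t^2 - (f j * f k)/t^2
          + (f j * f k * u j k) * (Real.exp (-t)/t)) := by
          rw [hH]
          exact Finset.sum_congr rfl fun j _ => Finset.sum_congr rfl fun k _ => expand j k
      _ = (∑ j, ∑ k, f j * f k * Real.exp (-(u j k * t)))/t^2 - (∑ j, ∑ k, f j * f k)/t^2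
          + (∑ j, ∑ k, f j * f k * u j k) * (Real.exp (-t)/t) := by
          simp_rw [Finset.sum_add_distrib, Finset.sum_sub_distrib, ← Finset.sum_div,
            ← Finset.sum_mul]
      _ = g t / t^2 := by rw [e1, e2, hg]; ring
  -- nonnegativity of H on Ioi 0
  have hgnn : ∀ t : ℝ, 0 ≤ t → 0 ≤ g t := fun t ht => gauss_kernel_nonneg f y ht
  have hHnn : ∀ t ∈ Ioi (0:ℝ), 0 ≤ H t := by
    intro t ht
    rw [key t ht]
    exact div_nonneg (hgnn t (le_of_lt ht)) (sq_nonneg t)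
  -- limit of g at infinity
  have hpos : 0 < ∑ j, f j^2 := by
    obtain ⟨j₀, hj₀⟩ := Function.ne_iff.mp hf
    apply Finset.sum_pos' (fun j _ => sq_nonneg _)
    exact ⟨j₀, Finset.mem_univ _, lt_of_le_of_ne (sq_nonneg _) (Ne.symm (pow_ne_zero 2 hj₀))⟩
  set L := ∑ j, f j^2 with hL
  have hlim : Tendsto g atTop (𝓝 L) := by
    have : L = ∑ j : Fin N, ∑ k : Fin N, (if j = k then f j^2 else 0) := by
      rw [hL]
      apply Finset.sum_congr rfl; intro j _
      rw [Finset.sum_ite_eq (Finset.univ) j (fun k => f j^2)]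
      simp
    rw [this, hg]
    apply tendsto_finset_sum
    intro j _
    apply tendsto_finset_sum
    intro k _
    by_cases hjk : j = k
    · subst hjk
      have : (fun t : ℝ => f j * f j * Real.exp (-(u j j * t))) = fun _ => f j^2 := by
        funext t
        simp [u, sub_self, sq]
      rw [this, if_pos rfl]
      exact tendsto_const_nhds
    · rw [if_neg hjk]
      have := (tendsto_exp_mul (hupos j k hjk)).const_mul (f j * f k)
      simpa using this
  -- choose T beyond which g ≥ L/2
  obtain ⟨t₀, ht₀⟩ := (hlim.eventually (eventually_gt_nhds (half_lt_self hpos))).exists_forall_of_atTop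
  set T := max t₀ 1 with hT
  have hT1 : (1:ℝ) ≤ T := le_max_right _ _
  have hTpos : (0:ℝ) < T := lt_of_lt_of_le one_pos hT1
  have hsub : Ioc T (T+1) ⊆ Ioi (0:ℝ) := fun x hx => lt_trans hTpos hx.1
  have hconst : ∀ t ∈ Ioc T (T+1), (L/2)/(T+1)^2 ≤ H t := by
    intro t ht
    have ht0 : (0:ℝ) < t := hsub ht
    rw [key t (hsub ht)]
    apply div_le_div₀ (hgnn t ht0.le)
    · exact (ht₀ t (le_trans (le_max_left _ _) ht.1.le)).le
    · positivity
    · nlinarith [ht.2, ht0]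
  have hmeas1 : (volume (Ioc T (T+1))).toReal = 1 := by
    rw [Real.volume_Ioc]
    norm_num
  have hlow : (L/2)/(T+1)^2 * (volume (Ioc T (T+1))).toReal ≤ ∫ t in Ioc T (T+1), H t := by
    apply MeasureTheory.setIntegral_ge_of_const_le_real measurableSet_Ioc
    · rw [Real.volume_Ioc]; exact ENNReal.ofReal_ne_top
    · exact hconst
    · exact hHint.mono_set hsub
  have hmono : (∫ t in Ioc T (T+1), H t) ≤ ∫ t in Ioi 0, H t := by
    apply MeasureTheory.setIntegral_mono_set hHint
    · filter_upwards [ae_restrict_mem measurableSet_Ioi] with t ht using hHnn t ht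
    · exact HasSubset.Subset.eventuallyLE hsub
  have hfinal : 0 < (L/2)/(T+1)^2 * (volume (Ioc T (T+1))).toReal := by
    rw [hmeas1]
    have : (0:ℝ) < (T+1)^2 := by positivity
    have h2 : 0 < L/2 := half_pos hpos
    positivity
  linarith
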